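/- (Hardy inequality, k < 1) Let k < 1 and let g ∈ C¹((0,1]) satisfy ∫₀¹ s^k (g(s)² + g'(s)²) ds < ∞. Then g extends continuously to s = 0 (g has a trace g(0)), and there exists C depending only on k such that ∫₀¹ s^{k-2} (g(s) - g(0))² ds ≤ C ∫₀¹ s^k g'(s)² ds. -/

import Mathlib

open Set MeasureTheory Filter

open scoped ENNReal

namespace HardyAux

lemma integrableOn_rpow_Ioc {c : ℝ} (hc : -1 < c) {s : ℝ} (hs : 0 < s) :
    IntegrableOn (fun t : ℝ => t ^ c) (Ioc (0:ℝ) s) := by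
  rw [← intervalIntegrable_iff_integrableOn_Ioc_of_le hs.le]
  exact intervalIntegral.intervalIntegrable_rpow' hc

lemma lintegral_rpow_Ioc {c : ℝ} (hc : -1 < c) {s : ℝ} (hs : 0 < s) :
    ∫⁻ t in Ioc (0:ℝ) s, ENNReal.ofReal (t ^ c) = ENNReal.ofReal (s ^ (c+1) / (c+1)) := by
  rw [← ofReal_integral_eq_lintegral_ofReal (integrableOn_rpow_Ioc hc hs)
    (by filter_upwards [ae_restrict_mem measurableSet_Ioc] with t ht
        exact Real.rpow_nonneg ht.1.le _)]
  rw [← intervalIntegral.integral_of_le hs.le, integral_rpow (Or.inl hc),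
    Real.zero_rpow (by linarith), sub_zero]

lemma lintegral_rpow_tail {c : ℝ} (hc : c < -1) {t : ℝ} (ht : 0 < t) (ht1 : t ≤ 1) :
    ∫⁻ s in Ioc t 1, ENNReal.ofReal (s ^ c) ≤ ENNReal.ofReal (t ^ (c+1) / (-(c+1))) := by
  have hcont : ContinuousOn (fun s : ℝ => s ^ c) (Icc t 1) := fun x hx =>
    (Real.continuousAt_rpow_const x c (Or.inl (ne_of_gt (lt_of_lt_of_le ht hx.1)))).continuousWithinAt
  have hint : IntegrableOn (fun s : ℝ => s ^ c) (Ioc t 1) :=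
    (hcont.integrableOn_compact isCompact_Icc).mono_set Ioc_subset_Icc_self
  rw [← ofReal_integral_eq_lintegral_ofReal hint
    (by filter_upwards [ae_restrict_mem measurableSet_Ioc] with s hs
        exact Real.rpow_nonneg (le_of_lt (lt_trans ht hs.1)) _)]
  apply ENNReal.ofReal_le_ofReal
  rw [← intervalIntegral.integral_of_le ht1, integral_rpow
    (Or.inr ⟨by linarith, by rw [uIcc_of_le ht1]; intro h; exact absurd h.1 (by linarith)⟩)]
  rw [Real.one_rpow]
  have h1 : c + 1 < 0 := by linarith
  rw [show (1 - t^(c+1))/(c+1) = (t^(c+1)-1)/(-(c+1)) by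
    rw [div_eq_div_iff (by linarith) (by linarith)]; ring]
  gcongr
  · linarith
  · linarith

lemma key_CS {a : ℝ} (ha1 : a < 1) {dg : ℝ → ℝ} {s : ℝ} (hs : 0 < s) (hs1 : s ≤ 1)
    (hmeas : AEMeasurable dg (volume.restrict (Ioc (0:ℝ) 1)))
    (hdg_int : IntegrableOn dg (Ioc (0:ℝ) 1)) :
    ENNReal.ofReal ((∫ t in Ioc (0:ℝ) s, dg t) ^ 2) ≤
      ENNReal.ofReal (s ^ (1-a) / (1-a)) *
        ∫⁻ t in Ioc (0:ℝ) s, ENNReal.ofReal (t ^ a * dg t ^ 2) := by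
  have hsub : Ioc (0:ℝ) s ⊆ Ioc 0 1 := Ioc_subset_Ioc le_rfl hs1
  have hmono : volume.restrict (Ioc (0:ℝ) s) ≤ volume.restrict (Ioc (0:ℝ) 1) :=
    Measure.restrict_mono hsub le_rfl
  have hmeas' : AEMeasurable dg (volume.restrict (Ioc (0:ℝ) s)) := hmeas.mono_measure hmono
  have hint' : IntegrableOn dg (Ioc (0:ℝ) s) := hdg_int.mono_set hsub
  set L1 : ℝ≥0∞ := ∫⁻ t in Ioc (0:ℝ) s, ENNReal.ofReal (t ^ (-a)) with hL1
  set L2 : ℝ≥0∞ := ∫⁻ t in Ioc (0:ℝ) s, ENNReal.ofReal (t ^ a * dg t ^ 2) with hL2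
  have habs : |∫ t in Ioc (0:ℝ) s, dg t| ≤ ∫ t in Ioc (0:ℝ) s, |dg t| := by
    simpa [Real.norm_eq_abs] using
      norm_integral_le_integral_norm (μ := volume.restrict (Ioc (0:ℝ) s)) dg
  have hof : ENNReal.ofReal (∫ t in Ioc (0:ℝ) s, |dg t|) =
      ∫⁻ t in Ioc (0:ℝ) s, ENNReal.ofReal |dg t| :=
    ofReal_integral_eq_lintegral_ofReal hint'.abs
      (ae_of_all _ fun t => abs_nonneg _)
  set f1 : ℝ → ℝ≥0∞ := fun t => ENNReal.ofReal (t ^ (-(a/2))) with hf1def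
  set f2 : ℝ → ℝ≥0∞ := fun t => ENNReal.ofReal (t ^ (a/2) * |dg t|) with hf2def
  have hf1 : AEMeasurable f1 (volume.restrict (Ioc (0:ℝ) s)) :=
    ((measurable_id.pow_const _).ennreal_ofReal).aemeasurable
  have hf2 : AEMeasurable f2 (volume.restrict (Ioc (0:ℝ) s)) :=
    (((measurable_id.pow_const _).aemeasurable).mul
      (continuous_abs.measurable.comp_aemeasurable hmeas')).ennreal_ofReal
  have heq : (fun t => ENNReal.ofReal |dg t|) =ᵐ[volume.restrict (Ioc (0:ℝ) s)] (f1 * f2) := by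
    filter_upwards [ae_restrict_mem measurableSet_Ioc] with t ht
    have h0 : (0:ℝ) < t := ht.1
    simp only [Pi.mul_apply, hf1def, hf2def]
    rw [← ENNReal.ofReal_mul (Real.rpow_nonneg h0.le _), ← mul_assoc, ← Real.rpow_add h0]
    norm_num
  have hL1eq : ∫⁻ t in Ioc (0:ℝ) s, (f1 t) ^ (2:ℝ) = L1 := by
    rw [hL1]
    apply lintegral_congr_ae
    filter_upwards [ae_restrict_mem measurableSet_Ioc] with t ht
    have h0 : (0:ℝ) ≤ t := ht.1.le
    rw [hf1def, ENNReal.ofReal_rpow_of_nonneg (Real.rpow_nonneg h0 _) (by norm_num),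
      ← Real.rpow_mul h0]
    norm_num
  have hL2eq : ∫⁻ t in Ioc (0:ℝ) s, (f2 t) ^ (2:ℝ) = L2 := by
    rw [hL2]
    apply lintegral_congr_ae
    filter_upwards [ae_restrict_mem measurableSet_Ioc] with t ht
    have h0 : (0:ℝ) ≤ t := ht.1.le
    have h2 : |dg t| ^ (2:ℝ) = dg t ^ 2 := by
      rw [show (2:ℝ) = ((2:ℕ):ℝ) by norm_num, Real.rpow_natCast, sq_abs]
    rw [hf2def, ENNReal.ofReal_rpow_of_nonneg (mul_nonneg (Real.rpow_nonneg h0 _) (abs_nonneg _))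
      (by norm_num), Real.mul_rpow (Real.rpow_nonneg h0 _) (abs_nonneg _),
      ← Real.rpow_mul h0, h2]
    norm_num
  have hpq : Real.HolderConjugate 2 2 := ⟨by norm_num, by norm_num, by norm_num⟩
  have holder : ∫⁻ t in Ioc (0:ℝ) s, ENNReal.ofReal |dg t| ≤ L1 ^ (1/2:ℝ) * L2 ^ (1/2:ℝ) := by
    calc ∫⁻ t in Ioc (0:ℝ) s, ENNReal.ofReal |dg t|
        = ∫⁻ t in Ioc (0:ℝ) s, (f1 * f2) t := lintegral_congr_ae heq
      _ ≤ (∫⁻ t in Ioc (0:ℝ) s, (f1 t) ^ (2:ℝ)) ^ (1/2:ℝ) *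
          (∫⁻ t in Ioc (0:ℝ) s, (f2 t) ^ (2:ℝ)) ^ (1/2:ℝ) :=
        ENNReal.lintegral_mul_le_Lp_mul_Lq _ hpq hf1 hf2
      _ = L1 ^ (1/2:ℝ) * L2 ^ (1/2:ℝ) := by rw [hL1eq, hL2eq]
  have hL1val : L1 = ENNReal.ofReal (s ^ (1-a) / (1-a)) := by
    rw [hL1, lintegral_rpow_Ioc (by linarith) hs, neg_add_eq_sub]
  calc ENNReal.ofReal ((∫ t in Ioc (0:ℝ) s, dg t) ^ 2)
      ≤ ENNReal.ofReal ((∫ t in Ioc (0:ℝ) s, |dg t|) ^ 2) := by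
        apply ENNReal.ofReal_le_ofReal
        rw [← sq_abs]
        exact pow_le_pow_left₀ (abs_nonneg _) habs 2
    _ = (∫⁻ t in Ioc (0:ℝ) s, ENNReal.ofReal |dg t|) ^ 2 := by
        rw [← hof, ← ENNReal.ofReal_pow (integral_nonneg fun t => abs_nonneg _)]
    _ ≤ (L1 ^ (1/2:ℝ) * L2 ^ (1/2:ℝ)) ^ 2 := by
        rw [sq, sq]; exact mul_le_mul' holder holder
    _ = L1 * L2 := by
        rw [mul_pow, ← ENNReal.rpow_natCast (L1 ^ (1/2:ℝ)) 2,
          ← ENNReal.rpow_natCast (L2 ^ (1/2:ℝ)) 2, ← ENNReal.rpow_mul, ← ENNReal.rpow_mul]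
        norm_num
    _ = ENNReal.ofReal (s ^ (1-a) / (1-a)) * L2 := by rw [hL1val]

end HardyAux

/-- **Hardy inequality, `k < 1`.** Let `k < 1` and let `g ∈ C¹((0,1])`
satisfy `∫₀¹ s^k (g² + g'²) ds < ∞`. Then `g` extends continuously to `s = 0` (it has a
trace `g(0)`), and there exists `C` depending only on `k` such that
`∫₀¹ s^{k-2} (g - g(0))² ds ≤ C ∫₀¹ s^k g'² ds`. -/
theorem hardy_inequality_k_lt_one (k : ℝ) (hk : k < 1) :
    ∃ C : ℝ, 0 < C ∧
      ∀ g dg : ℝ → ℝ,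
        (∀ s ∈ Ioc (0 : ℝ) 1, HasDerivAt g (dg s) s) →
        ContinuousOn dg (Ioc (0 : ℝ) 1) →
        IntegrableOn (fun s => s ^ k * (g s ^ 2 + dg s ^ 2)) (Ioc (0 : ℝ) 1) →
        ∃ g0 : ℝ,
          Tendsto g (nhdsWithin 0 (Ioc (0 : ℝ) 1)) (nhds g0) ∧
          ∫⁻ s in Ioc (0 : ℝ) 1, ENNReal.ofReal (s ^ (k - 2) * (g s - g0) ^ 2) ≤
            ENNReal.ofReal C *
              ∫⁻ s in Ioc (0 : ℝ) 1, ENNReal.ofReal (s ^ k * dg s ^ 2) := by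
  have hk1 : (0:ℝ) < 1 - k := by linarith
  refine ⟨4 / (1-k)^2, by positivity, ?_⟩
  intro g dg hderiv hcont hint
  set a : ℝ := (k+1)/2 with ha
  have ha1 : a < 1 := by rw [ha]; linarith
  have hka : k < a := by rw [ha]; linarith
  have h1ak : 1 - a = (1-k)/2 := by rw [ha]; ring
  have hak : a - k = (1-k)/2 := by rw [ha]; ring
  have hdgae : AEMeasurable dg (volume.restrict (Ioc (0:ℝ) 1)) :=
    hcont.aemeasurable measurableSet_Ioc
  have hdgsm : AEStronglyMeasurable dg (volume.restrict (Ioc (0:ℝ) 1)) :=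
    hcont.aestronglyMeasurable measurableSet_Ioc
  -- integrability of dg
  have hbound_int : IntegrableOn
      (fun t : ℝ => t ^ (-a) + t ^ k * (g t ^ 2 + dg t ^ 2)) (Ioc (0:ℝ) 1) :=
    (HardyAux.integrableOn_rpow_Ioc (by linarith) one_pos).add hint
  have hdg_int : IntegrableOn dg (Ioc (0:ℝ) 1) := by
    apply hbound_int.mono' hdgsm
    filter_upwards [ae_restrict_mem measurableSet_Ioc] with t ht
    have h0 : (0:ℝ) < t := ht.1
    have h1 : |dg t| = t ^ (-(a/2)) * (t ^ (a/2) * |dg t|) := by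
      rw [← mul_assoc, ← Real.rpow_add h0]; norm_num
    have hx2 : t ^ (-(a/2)) * t ^ (-(a/2)) = t ^ (-a) := by
      rw [← Real.rpow_add h0, show -(a/2) + -(a/2) = -a by ring]
    have hy2 : (t ^ (a/2) * |dg t|) * (t ^ (a/2) * |dg t|) = t ^ a * dg t ^ 2 := by
      rw [mul_mul_mul_comm, ← Real.rpow_add h0, abs_mul_abs_self]
      norm_num [pow_two]
    have hxy := two_mul_le_add_sq (t ^ (-(a/2))) (t ^ (a/2) * |dg t|)
    have hcmp : t ^ a * dg t ^ 2 ≤ t ^ k * dg t ^ 2 :=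
      mul_le_mul_of_nonneg_right
        (Real.rpow_le_rpow_of_exponent_ge h0 ht.2 hka.le) (sq_nonneg _)
    have hg : 0 ≤ t ^ k * g t ^ 2 :=
      mul_nonneg (Real.rpow_nonneg h0.le _) (sq_nonneg _)
    have hx2nn : 0 ≤ t ^ (-a) := Real.rpow_nonneg h0.le _
    have hy2nn : 0 ≤ t ^ a * dg t ^ 2 :=
      mul_nonneg (Real.rpow_nonneg h0.le _) (sq_nonneg _)
    rw [Real.norm_eq_abs]
    nlinarith [h1, hxy, hx2, hy2, hcmp, hg, hx2nn, hy2nn]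
  -- FTC and trace
  have hII : IntervalIntegrable dg volume 0 1 :=
    (intervalIntegrable_iff_integrableOn_Ioc_of_le zero_le_one).2 hdg_int
  set g0 : ℝ := g 1 - ∫ t in (0:ℝ)..1, dg t with hg0
  have hFTC : ∀ s ∈ Ioc (0:ℝ) 1, ∫ t in s..(1:ℝ), dg t = g 1 - g s := by
    intro s hs
    apply intervalIntegral.integral_eq_sub_of_hasDerivAt
    · intro x hx
      rw [uIcc_of_le hs.2] at hx
      exact hderiv x ⟨lt_of_lt_of_le hs.1 hx.1, hx.2⟩
    · exact hII.mono_set (by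
        rw [uIcc_of_le hs.2, uIcc_of_le zero_le_one]
        exact Icc_subset_Icc hs.1.le le_rfl)
  have hrepr : ∀ s ∈ Ioc (0:ℝ) 1, g s - g0 = ∫ t in (0:ℝ)..s, dg t := by
    intro s hs
    have h1 : IntervalIntegrable dg volume 0 s := hII.mono_set (by
      rw [uIcc_of_le hs.1.le, uIcc_of_le zero_le_one]
      exact Icc_subset_Icc le_rfl hs.2)
    have h2 : IntervalIntegrable dg volume s 1 := hII.mono_set (by
      rw [uIcc_of_le hs.2, uIcc_of_le zero_le_one]
      exact Icc_subset_Icc hs.1.le le_rfl)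
    have hadd := intervalIntegral.integral_add_adjacent_intervals h1 h2
    rw [hFTC s hs] at hadd
    rw [hg0]; linarith
  have hcont_prim : ContinuousOn (fun s => ∫ t in (0:ℝ)..s, dg t) (Icc (0:ℝ) 1) := by
    have := intervalIntegral.continuousOn_primitive_interval
      (a := (0:ℝ)) (b := (1:ℝ)) (μ := volume) (f := dg) ?_
    · rwa [uIcc_of_le zero_le_one] at this
    · rw [uIcc_of_le zero_le_one]
      exact (integrableOn_Icc_iff_integrableOn_Ioc).2 hdg_int
  have htend0 : Tendsto (fun s => ∫ t in (0:ℝ)..s, dg t) (nhdsWithin 0 (Ioc (0:ℝ) 1)) (nhds 0) := by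
    have h0mem : (0:ℝ) ∈ Icc (0:ℝ) 1 := ⟨le_rfl, zero_le_one⟩
    have hcw : ContinuousWithinAt (fun s => ∫ t in (0:ℝ)..s, dg t) (Icc (0:ℝ) 1) 0 :=
      hcont_prim 0 h0mem
    have := hcw.mono (Ioc_subset_Icc_self (a := (0:ℝ)) (b := 1))
    simpa [intervalIntegral.integral_same] using this.tendsto
  have htends : Tendsto g (nhdsWithin 0 (Ioc (0:ℝ) 1)) (nhds g0) := by
    have h := tendsto_const_nhds.add htend0 (f := fun _ : ℝ => g0)
    rw [add_zero] at h
    refine h.congr' ?_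
    filter_upwards [self_mem_nhdsWithin] with s hs
    have := hrepr s hs; linarith
  refine ⟨g0, htends, ?_⟩
  -- main estimate
  set μ : Measure ℝ := volume.restrict (Ioc (0:ℝ) 1) with hμ
  obtain ⟨d, hd, -, hdd⟩ : ∃ d : ℝ → ℝ, Measurable d ∧ True ∧ dg =ᵐ[μ] d :=
    ⟨hdgae.mk dg, hdgae.measurable_mk, trivial, hdgae.ae_eq_mk⟩
  set A : ℝ → ℝ≥0∞ := fun s => ∫⁻ t in Ioc (0:ℝ) s, ENNReal.ofReal (t ^ a * dg t ^ 2) with hA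
  have hCS : ∀ s ∈ Ioc (0:ℝ) 1,
      ENNReal.ofReal ((g s - g0) ^ 2) ≤ ENNReal.ofReal (s ^ (1-a) / (1-a)) * A s := by
    intro s hs
    have := HardyAux.key_CS ha1 hs.1 hs.2 hdgae hdg_int (dg := dg)
    rwa [← intervalIntegral.integral_of_le hs.1.le, ← hrepr s hs] at this
  set W : ℝ → ℝ → ℝ≥0∞ := fun s t =>
    if t ≤ s then ENNReal.ofReal (s ^ (k-1-a)) *
      (ENNReal.ofReal (t ^ a) * ENNReal.ofReal (d t ^ 2)) else 0 with hW
  have hWmeas : Measurable (Function.uncurry W) := by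
    have : Function.uncurry W = fun p : ℝ × ℝ =>
        if p.2 ≤ p.1 then ENNReal.ofReal (p.1 ^ (k-1-a)) *
          (ENNReal.ofReal (p.2 ^ a) * ENNReal.ofReal (d p.2 ^ 2)) else 0 := rfl
    rw [this]
    exact Measurable.ite (measurableSet_le measurable_snd measurable_fst)
      (((measurable_fst.pow_const _).ennreal_ofReal).mul
        (((measurable_snd.pow_const _).ennreal_ofReal).mul
          (((hd.comp measurable_snd).pow_const 2).ennreal_ofReal)))
      measurable_const
  have hinner : ∀ s ∈ Ioc (0:ℝ) 1,
      ∫⁻ t, W s t ∂μ = ENNReal.ofReal (s ^ (k-1-a)) * A s := by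
    intro s hs
    have hWind : (fun t => W s t) = Set.indicator (Iic s)
        (fun t => ENNReal.ofReal (s ^ (k-1-a)) *
          (ENNReal.ofReal (t ^ a) * ENNReal.ofReal (d t ^ 2))) := by
      funext t
      by_cases h : t ≤ s <;> simp [hW, Set.indicator_apply, mem_Iic, h]
    rw [hWind, lintegral_indicator measurableSet_Iic _, hμ,
      Measure.restrict_restrict measurableSet_Iic]
    have hset : Iic s ∩ Ioc (0:ℝ) 1 = Ioc (0:ℝ) s := by
      ext x
      simp only [mem_inter_iff, mem_Iic, mem_Ioc]
      constructor
      · rintro ⟨h1, h2, h3⟩; exact ⟨h2, h1⟩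
      · rintro ⟨h1, h2⟩; exact ⟨h2, h1, h2.trans hs.2⟩
    rw [hset, lintegral_const_mul' _ _ ENNReal.ofReal_ne_top]
    congr 1
    rw [hA]
    apply lintegral_congr_ae
    have hdd' : dg =ᵐ[volume.restrict (Ioc (0:ℝ) s)] d :=
      hdd.filter_mono (ae_mono (Measure.restrict_mono
        (Ioc_subset_Ioc le_rfl hs.2) le_rfl))
    filter_upwards [ae_restrict_mem measurableSet_Ioc, hdd'] with t ht hteq
    rw [← hteq, ← ENNReal.ofReal_mul (Real.rpow_nonneg ht.1.le _)]
  have houter : ∀ t ∈ Ioc (0:ℝ) 1,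
      ∫⁻ s, W s t ∂μ ≤ ENNReal.ofReal (2/(1-k)) *
        (ENNReal.ofReal (t ^ k) * ENNReal.ofReal (d t ^ 2)) := by
    intro t ht
    have hWind : (fun s => W s t) = fun s => Set.indicator (Ici t)
        (fun s => ENNReal.ofReal (s ^ (k-1-a))) s *
          (ENNReal.ofReal (t ^ a) * ENNReal.ofReal (d t ^ 2)) := by
      funext s
      by_cases h : t ≤ s <;> simp [hW, Set.indicator_apply, mem_Ici, h]
    rw [hWind, lintegral_mul_const' _ _
        (ENNReal.mul_ne_top ENNReal.ofReal_ne_top ENNReal.ofReal_ne_top),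
      lintegral_indicator measurableSet_Ici _, hμ, Measure.restrict_restrict measurableSet_Ici]
    have hset : Ici t ∩ Ioc (0:ℝ) 1 = Icc t 1 := by
      ext x
      simp only [mem_inter_iff, mem_Ici, mem_Ioc, mem_Icc]
      constructor
      · rintro ⟨h1, h2, h3⟩; exact ⟨h1, h3⟩
      · rintro ⟨h1, h2⟩; exact ⟨h1, lt_of_lt_of_le ht.1 h1, h2⟩
    rw [hset, ← setLIntegral_congr (Ioc_ae_eq_Icc (a := t) (b := (1:ℝ)))]
    have htail := HardyAux.lintegral_rpow_tail (c := k-1-a) (by linarith) ht.1 ht.2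
    rw [show k-1-a+1 = k-a by ring, show -(k-a) = a-k by ring] at htail
    refine le_trans (mul_le_mul_left htail _) (le_of_eq ?_)
    have hmix : ENNReal.ofReal (t^(k-a)/(a-k)) * ENNReal.ofReal (t^a)
        = ENNReal.ofReal (2/(1-k)) * ENNReal.ofReal (t^k) := by
      rw [← ENNReal.ofReal_mul (div_nonneg (Real.rpow_nonneg ht.1.le _) (by linarith [hak])),
        ← ENNReal.ofReal_mul (by positivity)]
      congr 1
      rw [div_mul_eq_mul_div, ← Real.rpow_add ht.1, show k - a + a = k by ring, hak]
      field_simp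
    rw [← mul_assoc, hmix, mul_assoc]
  set RHS : ℝ≥0∞ := ∫⁻ s in Ioc (0:ℝ) 1, ENNReal.ofReal (s ^ k * dg s ^ 2) with hRHS
  set T : ℝ≥0∞ := ∫⁻ s, ENNReal.ofReal (s ^ (k-1-a)) * A s ∂μ with hT
  have hstep1 : ∫⁻ s in Ioc (0:ℝ) 1, ENNReal.ofReal (s ^ (k-2) * (g s - g0)^2) ≤
      ENNReal.ofReal (2/(1-k)) * T := by
    have hmono2 : ∫⁻ s in Ioc (0:ℝ) 1, ENNReal.ofReal (s^(k-2) * (g s - g0)^2) ≤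
        ∫⁻ s, ENNReal.ofReal (2/(1-k)) * (ENNReal.ofReal (s ^ (k-1-a)) * A s) ∂μ := by
      apply lintegral_mono_ae
      filter_upwards [ae_restrict_mem measurableSet_Ioc] with s hs
      have h0 : (0:ℝ) < s := hs.1
      have hco : s^(k-2) * s^(1-a) = s^(k-1-a) := by
        rw [← Real.rpow_add h0, show k-2+(1-a) = k-1-a by ring]
      have hreal : s^(k-2) * (s^(1-a)/(1-a)) = s^(k-1-a) * (2/(1-k)) := by
        calc s^(k-2) * (s^(1-a)/(1-a)) = (s^(k-2) * s^(1-a)) * (1/(1-a)) := by ring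
          _ = s^(k-1-a) * (1/(1-a)) := by rw [hco]
          _ = s^(k-1-a) * (2/(1-k)) := by rw [h1ak, one_div_div]
      rw [ENNReal.ofReal_mul (Real.rpow_nonneg h0.le _)]
      calc ENNReal.ofReal (s^(k-2)) * ENNReal.ofReal ((g s - g0)^2)
          ≤ ENNReal.ofReal (s^(k-2)) * (ENNReal.ofReal (s^(1-a)/(1-a)) * A s) :=
            mul_le_mul_right (hCS s hs) _
        _ = ENNReal.ofReal (2/(1-k)) * (ENNReal.ofReal (s^(k-1-a)) * A s) := by
            rw [← mul_assoc, ← ENNReal.ofReal_mul (Real.rpow_nonneg h0.le _), hreal,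
              ENNReal.ofReal_mul (Real.rpow_nonneg h0.le _)]
            ring
    calc ∫⁻ s in Ioc (0:ℝ) 1, ENNReal.ofReal (s^(k-2) * (g s - g0)^2)
        ≤ ∫⁻ s, ENNReal.ofReal (2/(1-k)) * (ENNReal.ofReal (s ^ (k-1-a)) * A s) ∂μ := hmono2
      _ = ENNReal.ofReal (2/(1-k)) * T := by
          rw [lintegral_const_mul' _ _ ENNReal.ofReal_ne_top, hT]
  have hTeq : T = ∫⁻ s, (∫⁻ t, W s t ∂μ) ∂μ := by
    rw [hT]
    apply lintegral_congr_ae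
    filter_upwards [ae_restrict_mem measurableSet_Ioc] with s hs
    rw [hinner s hs]
  have hswap : ∫⁻ s, (∫⁻ t, W s t ∂μ) ∂μ = ∫⁻ t, (∫⁻ s, W s t ∂μ) ∂μ :=
    lintegral_lintegral_swap hWmeas.aemeasurable
  have hTle : T ≤ ENNReal.ofReal (2/(1-k)) * RHS := by
    rw [hTeq, hswap]
    calc ∫⁻ t, (∫⁻ s, W s t ∂μ) ∂μ
        ≤ ∫⁻ t, ENNReal.ofReal (2/(1-k)) *
            (ENNReal.ofReal (t^k) * ENNReal.ofReal (d t^2)) ∂μ := by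
          apply lintegral_mono_ae
          filter_upwards [ae_restrict_mem measurableSet_Ioc] with t ht
          exact houter t ht
      _ = ENNReal.ofReal (2/(1-k)) * RHS := by
          rw [lintegral_const_mul' _ _ ENNReal.ofReal_ne_top, hRHS]
          congr 1
          apply lintegral_congr_ae
          filter_upwards [ae_restrict_mem measurableSet_Ioc, hdd] with t ht hteq
          rw [← hteq, ← ENNReal.ofReal_mul (Real.rpow_nonneg ht.1.le _)]
  calc ∫⁻ s in Ioc (0:ℝ) 1, ENNReal.ofReal (s ^ (k-2) * (g s - g0)^2)
      ≤ ENNReal.ofReal (2/(1-k)) * T := hstep1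
    _ ≤ ENNReal.ofReal (2/(1-k)) * (ENNReal.ofReal (2/(1-k)) * RHS) :=
        mul_le_mul_right hTle _
    _ = ENNReal.ofReal (4/(1-k)^2) * RHS := by
        rw [← mul_assoc, ← ENNReal.ofReal_mul (by positivity)]
        congr 2
        field_simp
        ring
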